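/- Let P, Q be probability measures on compact Ω ⊂ ℝ^d and let (f_{P,Q}, g_{P,Q}) be continuous bounded functions on Ω with ∫∫ exp(f_{P,Q}(x)+g_{P,Q}(y)−½‖x−y‖²) dP(x)dQ(y) = 1 satisfying the Schrödinger optimality conditions ∫ exp(f_{P,Q}(x)+g_{P,Q}(y)−½‖x−y‖²) dQ(y) = 1 for P-a.e. x and ∫ exp(f_{P,Q}(x)+g_{P,Q}(y)−½‖x−y‖²) dP(x) = 1 for Q-a.e. y. Then for any continuous f, g on Ω with ∫∫ exp(f(x)+g(y)−½‖x−y‖²) dP(x)dQ(y) = 1, writing h(x,y)=f(x)+g(y) and h_{P,Q}(x,y)=f_{P,Q}(x)+g_{P,Q}(y), and dπ_{P,Q} = exp(h_{P,Q}−½‖x−y‖²)dPdQ: |S₁(P,Q) − ∫h dP dQ − ½∫(h−h_{P,Q})² dπ_{P,Q}| ≤ (1/6)‖h−h_{P,Q}‖_∞³ e^{‖h−h_{P,Q}‖_∞}, where S₁(P,Q) = ∫h_{P,Q} dP dQ. -/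

import Mathlib

open MeasureTheory Real

lemma exp_cubic_bound' (x : ℝ) : |Real.exp x - 1 - x - x ^ 2 / 2| ≤ |x| ^ 3 / 6 * Real.exp |x| := by
  have hexp : ∀ y : ℝ, Real.exp y = ∑' n : ℕ, y ^ n / n.factorial := by
    intro y
    rw [Real.exp_eq_exp_ℝ, NormedSpace.exp_eq_tsum_div]
  have hs := Real.summable_pow_div_factorial x
  have hkey : Real.exp x - 1 - x - x ^ 2 / 2 = ∑' n : ℕ, x ^ (n + 3) / (n + 3).factorial := by
    have h3 := Summable.sum_add_tsum_nat_add (f := fun n : ℕ => x ^ n / n.factorial) 3 hs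
    rw [hexp x, ← h3]
    simp [Finset.sum_range_succ, Nat.factorial]
    ring
  have hfact : ∀ n : ℕ, (6 : ℝ) * n.factorial ≤ ((n + 3).factorial : ℝ) := by
    intro n
    have h6 : 6 ≤ (n + 3) * ((n + 2) * (n + 1)) := by
      calc (6:ℕ) = 3 * (2 * 1) := rfl
        _ ≤ (n + 3) * ((n + 2) * (n + 1)) :=
          Nat.mul_le_mul (by omega) (Nat.mul_le_mul (by omega) (by omega))
    have : 6 * n.factorial ≤ (n + 3).factorial := by
      calc 6 * n.factorial ≤ ((n + 3) * ((n + 2) * (n + 1))) * n.factorial :=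
            Nat.mul_le_mul_right _ h6
        _ = (n + 3).factorial := by simp [Nat.factorial_succ]; ring
    exact_mod_cast this
  have hbound : ∀ n : ℕ, |x ^ (n + 3) / (n + 3).factorial| ≤ |x| ^ 3 / 6 * (|x| ^ n / n.factorial) := by
    intro n
    rw [abs_div, abs_pow, Nat.abs_cast]
    have h1 : |x| ^ (n + 3) / ((n + 3).factorial : ℝ) ≤ |x| ^ (n + 3) / (6 * n.factorial) :=
      div_le_div_of_nonneg_left (by positivity) (by positivity) (hfact n)
    refine h1.trans (le_of_eq ?_)
    rw [pow_add]
    field_simp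
  have hsb : Summable (fun n : ℕ => |x ^ (n + 3) / (n + 3).factorial|) := by
    refine Summable.of_nonneg_of_le (fun n => abs_nonneg _) hbound ?_
    exact (Real.summable_pow_div_factorial |x|).mul_left _
  have hsr : Summable (fun n : ℕ => |x| ^ 3 / 6 * (|x| ^ n / n.factorial)) :=
    (Real.summable_pow_div_factorial |x|).mul_left _
  calc |Real.exp x - 1 - x - x ^ 2 / 2|
      = |∑' n : ℕ, x ^ (n + 3) / (n + 3).factorial| := by rw [hkey]
    _ ≤ ∑' n : ℕ, |x ^ (n + 3) / (n + 3).factorial| := by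
        simpa only [Real.norm_eq_abs] using norm_tsum_le_tsum_norm
          (f := fun n : ℕ => x ^ (n + 3) / (n + 3).factorial)
          (by simpa only [Real.norm_eq_abs] using hsb)
    _ ≤ ∑' n : ℕ, |x| ^ 3 / 6 * (|x| ^ n / n.factorial) := Summable.tsum_le_tsum hbound hsb hsr
    _ = |x| ^ 3 / 6 * Real.exp |x| := by
        rw [tsum_mul_left, hexp |x|]

/-- Second-order expansion of the entropic transport cost: for any normalized dual
pair `h = f ⊕ g`, `|S₁(P,Q) − ∫h dPdQ − ½∫(h−h_{P,Q})² dπ_{P,Q}|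
≤ (1/6)‖h−h_{P,Q}‖_∞³ e^{‖h−h_{P,Q}‖_∞}`, where `S₁(P,Q) = ∫ h_{P,Q} dPdQ`. -/
theorem entropic_cost_quadratic_expansion (d : ℕ)
    (Ω : Set (EuclideanSpace ℝ (Fin d))) (hΩ : IsCompact Ω)
    (P Q : Measure (EuclideanSpace ℝ (Fin d)))
    [IsProbabilityMeasure P] [IsProbabilityMeasure Q]
    (hP : P Ωᶜ = 0) (hQ : Q Ωᶜ = 0)
    (fP gQ : EuclideanSpace ℝ (Fin d) → ℝ)
    (hfP : Continuous fP) (hgQ : Continuous gQ)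
    (κ : ℝ) (hfPbd : ∀ x, |fP x| ≤ κ) (hgQbd : ∀ y, |gQ y| ≤ κ)
    (hnormPQ : ∫ x, (∫ y, exp (fP x + gQ y - ‖x - y‖ ^ 2 / 2) ∂Q) ∂P = 1)
    (hopt1 : ∀ᵐ x ∂P, ∫ y, exp (fP x + gQ y - ‖x - y‖ ^ 2 / 2) ∂Q = 1)
    (hopt2 : ∀ᵐ y ∂Q, ∫ x, exp (fP x + gQ y - ‖x - y‖ ^ 2 / 2) ∂P = 1)
    (f g : EuclideanSpace ℝ (Fin d) → ℝ) (hf : Continuous f) (hg : Continuous g)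
    (hnorm : ∫ x, (∫ y, exp (f x + g y - ‖x - y‖ ^ 2 / 2) ∂Q) ∂P = 1) :
    |(∫ x, (∫ y, (fP x + gQ y) ∂Q) ∂P)
        - (∫ x, (∫ y, (f x + g y) ∂Q) ∂P)
        - (1 / 2) * ∫ x, (∫ y,
            (f x + g y - (fP x + gQ y)) ^ 2
              * exp (fP x + gQ y - ‖x - y‖ ^ 2 / 2) ∂Q) ∂P|
      ≤ (1 / 6) * (⨆ x ∈ Ω, ⨆ y ∈ Ω, |f x + g y - (fP x + gQ y)|) ^ 3
          * exp (⨆ x ∈ Ω, ⨆ y ∈ Ω, |f x + g y - (fP x + gQ y)|) := by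
  set φ : EuclideanSpace ℝ (Fin d) × EuclideanSpace ℝ (Fin d) → ℝ := fun z => exp (fP z.1 + gQ z.2 - ‖z.1 - z.2‖ ^ 2 / 2) with hφdef
  set u : EuclideanSpace ℝ (Fin d) × EuclideanSpace ℝ (Fin d) → ℝ := fun z => f z.1 + g z.2 - (fP z.1 + gQ z.2) with hudef
  set M : ℝ := ⨆ x ∈ Ω, ⨆ y ∈ Ω, |f x + g y - (fP x + gQ y)| with hMdef
  have hφc : Continuous φ := by rw [hφdef]; fun_prop
  have huc : Continuous u := by rw [hudef]; fun_prop
  -- a.e. membership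
  have hΩm : MeasurableSet Ω := hΩ.isClosed.measurableSet
  have haeP : ∀ᵐ x ∂P, x ∈ Ω := by
    rw [ae_iff]; exact hP
  have haeQ : ∀ᵐ y ∂Q, y ∈ Ω := by
    rw [ae_iff]; exact hQ
  have hprod0 : (P.prod Q) ((Ω ×ˢ Ω)ᶜ) = 0 := by
    rw [Set.compl_prod_eq_union]
    refine le_antisymm ?_ (by simp)
    refine (measure_union_le _ _).trans ?_
    simp [Measure.prod_prod, hP, hQ]
  have haeprod : ∀ᵐ z ∂(P.prod Q), z ∈ Ω ×ˢ Ω := by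
    rw [ae_iff]
    exact measure_mono_null (fun a ha => ha) hprod0
  -- integrability helpers
  have hint : ∀ F : EuclideanSpace ℝ (Fin d) × EuclideanSpace ℝ (Fin d) → ℝ, Continuous F → Integrable F (P.prod Q) := by
    intro F hF
    obtain ⟨C, hC⟩ := (hΩ.prod hΩ).exists_bound_of_continuousOn hF.continuousOn
    exact (integrable_const C).mono' hF.aestronglyMeasurable
      (haeprod.mono fun z hz => hC z hz)
  have hintP : ∀ a : EuclideanSpace ℝ (Fin d) → ℝ, Continuous a → Integrable a P := by
    intro a ha
    obtain ⟨C, hC⟩ := hΩ.exists_bound_of_continuousOn ha.continuousOn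
    exact (integrable_const C).mono' ha.aestronglyMeasurable
      (haeP.mono fun x hx => hC x hx)
  have hintQ : ∀ a : EuclideanSpace ℝ (Fin d) → ℝ, Continuous a → Integrable a Q := by
    intro a ha
    obtain ⟨C, hC⟩ := hΩ.exists_bound_of_continuousOn ha.continuousOn
    exact (integrable_const C).mono' ha.aestronglyMeasurable
      (haeQ.mono fun x hx => hC x hx)
  -- bound M
  obtain ⟨C, hC⟩ := (hΩ.prod hΩ).exists_bound_of_continuousOn huc.continuousOn
  have hub : ∀ x ∈ Ω, ∀ y ∈ Ω, |f x + g y - (fP x + gQ y)| ≤ max C 0 := by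
    intro x hx y hy
    have := hC (x, y) ⟨hx, hy⟩
    rw [hudef] at this
    simp only [Real.norm_eq_abs] at this
    exact this.trans (le_max_left _ _)
  have hMle : ∀ x ∈ Ω, ∀ y ∈ Ω, |f x + g y - (fP x + gQ y)| ≤ M := by
    intro x hx y hy
    have s1 : |f x + g y - (fP x + gQ y)|
        ≤ ⨆ y ∈ Ω, |f x + g y - (fP x + gQ y)| := by
      have hbdd : BddAbove (Set.range fun y =>
          ⨆ _ : y ∈ Ω, |f x + g y - (fP x + gQ y)|) := by
        refine ⟨max C 0, ?_⟩
        rintro _ ⟨y', rfl⟩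
        exact Real.iSup_le (fun hy' => hub x hx y' hy') (le_max_right _ _)
      calc |f x + g y - (fP x + gQ y)|
          = ⨆ _ : y ∈ Ω, |f x + g y - (fP x + gQ y)| := by rw [ciSup_pos hy]
        _ ≤ ⨆ y ∈ Ω, |f x + g y - (fP x + gQ y)| := le_ciSup hbdd y
    refine s1.trans ?_
    have hbdd2 : BddAbove (Set.range fun x =>
        ⨆ _ : x ∈ Ω, ⨆ y ∈ Ω, |f x + g y - (fP x + gQ y)|) := by
      refine ⟨max C 0, ?_⟩
      rintro _ ⟨x', rfl⟩
      refine Real.iSup_le (fun hx' => ?_) (le_max_right _ _)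
      exact Real.iSup_le (fun y' => Real.iSup_le (fun hy' => hub x' hx' y' hy')
        (le_max_right _ _)) (le_max_right _ _)
    rw [hMdef]
    calc (⨆ y ∈ Ω, |f x + g y - (fP x + gQ y)|)
        = ⨆ _ : x ∈ Ω, ⨆ y ∈ Ω, |f x + g y - (fP x + gQ y)| := by rw [ciSup_pos hx]
      _ ≤ ⨆ x ∈ Ω, ⨆ y ∈ Ω, |f x + g y - (fP x + gQ y)| := le_ciSup hbdd2 x
  have hM0 : 0 ≤ M := by
    have hne : Ω.Nonempty := by
      by_contra h
      rw [Set.not_nonempty_iff_eq_empty] at h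
      rw [h] at hP
      simp at hP
    obtain ⟨x0, hx0⟩ := hne
    exact (abs_nonneg _).trans (hMle x0 hx0 x0 hx0)
  -- normalization in product form
  have hPQ1 : ∫ z, φ z ∂(P.prod Q) = 1 := by
    rw [integral_prod _ (hint φ hφc)]; exact hnormPQ
  have hG1 : ∫ z, Real.exp (u z) * φ z ∂(P.prod Q) = 1 := by
    have heq : (fun z : EuclideanSpace ℝ (Fin d) × EuclideanSpace ℝ (Fin d) => Real.exp (u z) * φ z)
        = fun z : EuclideanSpace ℝ (Fin d) × EuclideanSpace ℝ (Fin d) => Real.exp (f z.1 + g z.2 - ‖z.1 - z.2‖ ^ 2 / 2) := by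
      funext z
      rw [hudef, hφdef, ← Real.exp_add]
      congr 1
      ring
    rw [heq, integral_prod _ (hint _ (by first | (simp only [hφdef, hudef]; fun_prop) | fun_prop))]
    exact hnorm
  -- cancellation of the linear term
  have key1 : ∀ a : EuclideanSpace ℝ (Fin d) → ℝ, Continuous a →
      ∫ z, a z.1 * φ z ∂(P.prod Q) = ∫ x, a x ∂P := by
    intro a ha
    rw [integral_prod _ (hint _ (by first | (simp only [hφdef, hudef]; fun_prop) | fun_prop))]
    refine integral_congr_ae ?_
    filter_upwards [hopt1] with x hx
    rw [integral_const_mul]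
    simp only [hφdef]
    rw [hx, mul_one]
  have key2 : ∀ b : EuclideanSpace ℝ (Fin d) → ℝ, Continuous b →
      ∫ z, b z.2 * φ z ∂(P.prod Q) = ∫ y, b y ∂Q := by
    intro b hb
    rw [integral_prod_symm _ (hint _ (by first | (simp only [hφdef, hudef]; fun_prop) | fun_prop))]
    refine integral_congr_ae ?_
    filter_upwards [hopt2] with y hy
    rw [integral_const_mul]
    simp only [hφdef]
    rw [hy, mul_one]
  have hcancel : ∫ z, u z * φ z ∂(P.prod Q)
      = (∫ x, f x ∂P + ∫ y, g y ∂Q) - (∫ x, fP x ∂P + ∫ y, gQ y ∂Q) := by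
    have h1 : (fun z : EuclideanSpace ℝ (Fin d) × EuclideanSpace ℝ (Fin d) => u z * φ z)
        = fun z => (f z.1 * φ z + g z.2 * φ z) - (fP z.1 * φ z + gQ z.2 * φ z) := by
      funext z
      rw [hudef]
      ring
    rw [h1]
    have i1 : Integrable (fun z : EuclideanSpace ℝ (Fin d) × EuclideanSpace ℝ (Fin d) =>
        f z.1 * φ z) (P.prod Q) := hint _ ((hf.comp continuous_fst).mul hφc)
    have i2 : Integrable (fun z : EuclideanSpace ℝ (Fin d) × EuclideanSpace ℝ (Fin d) =>
        g z.2 * φ z) (P.prod Q) := hint _ ((hg.comp continuous_snd).mul hφc)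
    have i3 : Integrable (fun z : EuclideanSpace ℝ (Fin d) × EuclideanSpace ℝ (Fin d) =>
        fP z.1 * φ z) (P.prod Q) := hint _ ((hfP.comp continuous_fst).mul hφc)
    have i4 : Integrable (fun z : EuclideanSpace ℝ (Fin d) × EuclideanSpace ℝ (Fin d) =>
        gQ z.2 * φ z) (P.prod Q) := hint _ ((hgQ.comp continuous_snd).mul hφc)
    have i12 : Integrable (fun z : EuclideanSpace ℝ (Fin d) × EuclideanSpace ℝ (Fin d) =>
        f z.1 * φ z + g z.2 * φ z) (P.prod Q) := i1.add i2
    have i34 : Integrable (fun z : EuclideanSpace ℝ (Fin d) × EuclideanSpace ℝ (Fin d) =>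
        fP z.1 * φ z + gQ z.2 * φ z) (P.prod Q) := i3.add i4
    rw [integral_sub i12 i34, integral_add i1 i2, integral_add i3 i4,
      key1 f hf, key2 g hg, key1 fP hfP, key2 gQ hgQ]
  -- iterated-to-scalar conversions for the target
  have hA : ∫ x, (∫ y, (fP x + gQ y) ∂Q) ∂P = ∫ x, fP x ∂P + ∫ y, gQ y ∂Q := by
    have h1 : ∀ x, ∫ y, (fP x + gQ y) ∂Q = fP x + ∫ y, gQ y ∂Q := by
      intro x
      rw [integral_add (integrable_const _) (hintQ gQ hgQ), integral_const]
      simp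
    simp only [h1]
    rw [integral_add (hintP fP hfP) (integrable_const _), integral_const]
    simp
  have hB : ∫ x, (∫ y, (f x + g y) ∂Q) ∂P = ∫ x, f x ∂P + ∫ y, g y ∂Q := by
    have h1 : ∀ x, ∫ y, (f x + g y) ∂Q = f x + ∫ y, g y ∂Q := by
      intro x
      rw [integral_add (integrable_const _) (hintQ g hg), integral_const]
      simp
    simp only [h1]
    rw [integral_add (hintP f hf) (integrable_const _), integral_const]
    simp
  have hC2 : ∫ x, (∫ y, (f x + g y - (fP x + gQ y)) ^ 2
        * exp (fP x + gQ y - ‖x - y‖ ^ 2 / 2) ∂Q) ∂P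
      = ∫ z, (u z) ^ 2 * φ z ∂(P.prod Q) := by
    rw [integral_prod _ (hint _ (by first | (simp only [hφdef, hudef]; fun_prop) | fun_prop))]
  -- remainder identity
  have hsplit : ∫ z, (Real.exp (u z) - 1 - u z - (u z) ^ 2 / 2) * φ z ∂(P.prod Q)
      = (∫ x, (∫ y, (fP x + gQ y) ∂Q) ∂P)
        - (∫ x, (∫ y, (f x + g y) ∂Q) ∂P)
        - (1 / 2) * ∫ x, (∫ y, (f x + g y - (fP x + gQ y)) ^ 2
              * exp (fP x + gQ y - ‖x - y‖ ^ 2 / 2) ∂Q) ∂P := by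
    have h1 : (fun z : EuclideanSpace ℝ (Fin d) × EuclideanSpace ℝ (Fin d) =>
          (Real.exp (u z) - 1 - u z - (u z) ^ 2 / 2) * φ z)
        = fun z => Real.exp (u z) * φ z - φ z - u z * φ z
            - (1 / 2) * ((u z) ^ 2 * φ z) := by
      funext z
      ring
    rw [h1]
    have i1 : Integrable (fun z : EuclideanSpace ℝ (Fin d) × EuclideanSpace ℝ (Fin d) =>
        Real.exp (u z) * φ z) (P.prod Q) := hint _ ((Real.continuous_exp.comp huc).mul hφc)
    have i2 := hint φ hφc
    have i3 : Integrable (fun z : EuclideanSpace ℝ (Fin d) × EuclideanSpace ℝ (Fin d) =>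
        u z * φ z) (P.prod Q) := hint _ (huc.mul hφc)
    have i4 : Integrable (fun z : EuclideanSpace ℝ (Fin d) × EuclideanSpace ℝ (Fin d) =>
        (u z) ^ 2 * φ z) (P.prod Q) := hint _ ((huc.pow 2).mul hφc)
    have i12 : Integrable (fun z : EuclideanSpace ℝ (Fin d) × EuclideanSpace ℝ (Fin d) =>
        Real.exp (u z) * φ z - φ z) (P.prod Q) := i1.sub i2
    have i123 : Integrable (fun z : EuclideanSpace ℝ (Fin d) × EuclideanSpace ℝ (Fin d) =>
        Real.exp (u z) * φ z - φ z - u z * φ z) (P.prod Q) := i12.sub i3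
    have i4' : Integrable (fun z : EuclideanSpace ℝ (Fin d) × EuclideanSpace ℝ (Fin d) =>
        (1 / 2 : ℝ) * ((u z) ^ 2 * φ z)) (P.prod Q) := i4.const_mul _
    rw [integral_sub i123 i4', integral_sub i12 i3,
      integral_sub i1 i2, integral_const_mul, hG1, hPQ1, hcancel, hA, hB, hC2]
    ring
  rw [← hsplit]
  -- final bound
  calc |∫ z, (Real.exp (u z) - 1 - u z - (u z) ^ 2 / 2) * φ z ∂(P.prod Q)|
      ≤ ∫ z, |(Real.exp (u z) - 1 - u z - (u z) ^ 2 / 2) * φ z| ∂(P.prod Q) := by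
        exact abs_integral_le_integral_abs
    _ ≤ ∫ z, (1 / 6 * M ^ 3 * Real.exp M) * φ z ∂(P.prod Q) := by
        refine integral_mono_ae ((hint _ (by first | (simp only [hφdef, hudef]; fun_prop) | fun_prop)).abs) ((hint φ hφc).const_mul _) ?_
        filter_upwards [haeprod] with z hz
        have hzu : |u z| ≤ M := hMle z.1 hz.1 z.2 hz.2
        have h1 : |Real.exp (u z) - 1 - u z - (u z) ^ 2 / 2| ≤ 1 / 6 * M ^ 3 * Real.exp M := by
          refine (exp_cubic_bound' (u z)).trans ?_
          have h2 : |u z| ^ 3 ≤ M ^ 3 := pow_le_pow_left₀ (abs_nonneg _) hzu 3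
          have h3 : Real.exp |u z| ≤ Real.exp M := Real.exp_le_exp.2 hzu
          calc |u z| ^ 3 / 6 * Real.exp |u z| ≤ M ^ 3 / 6 * Real.exp M := by
                apply mul_le_mul (by linarith) h3 (Real.exp_nonneg _) (by positivity)
            _ = 1 / 6 * M ^ 3 * Real.exp M := by ring
        rw [abs_mul, abs_of_nonneg (Real.exp_nonneg _)]
        exact mul_le_mul_of_nonneg_right h1 (Real.exp_nonneg _)
    _ = 1 / 6 * M ^ 3 * Real.exp M := by
        rw [integral_const_mul, hPQ1, mul_one]
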